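/- arXiv:1809.04005 — 4 statements merged into one kernel-verified Lean document; each statement's English description precedes it below -/
import Mathlib

section
/- Let k ∈ ℕ with k ≥ 1, α ∈ (k−1, k), a ∈ ℝ, b > a and φ ∈ C^k([a,b]). Define g(t) := −(1/Γ(k−α)) ∫_a^b φ^{(k)}(τ) (t−τ)^{k−α−1} dτ for t > b (this integral is finite for every t ∈ [b,+∞)). Then a function u ∈ C^{k,α}_a satisfies D_a^α u(t) = 0 for all t ∈ (b,+∞) and u(t) = φ(t) for all t ∈ [a, b], if and only if it satisfies D_b^α u(t) = g(t) for all t ∈ (b,+∞) and u(t) = φ(t) for all t ∈ [a, b]. -/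
open MeasureTheory Set

noncomputable section

/-- The open interval `(a, +∞)` in `ℝ`, for an initial point `a ∈ ℝ ∪ {-∞}`
(encoded as `a : EReal`, with `a = ⊥` playing the role of `-∞`). -/
def upSet (a : EReal) : Set ℝ := {τ : ℝ | a < (τ : EReal)}

/-- The closure of `(a, +∞)` in `ℝ`: it is `[a, +∞)` if `a ∈ ℝ`, and all of `ℝ` if `a = -∞`. -/
def upBar (a : EReal) : Set ℝ := {τ : ℝ | a ≤ (τ : EReal)}

/-- `f ∈ AC^{k-1}(s)`: the iterated derivatives of `f` of orders `0,…,k-1` (taken within `s`)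
are absolutely continuous on `s`, i.e. each of them is the (locally integrable) indefinite
integral of the next one (fundamental theorem of calculus characterization of absolute
continuity). -/
def ACkOn (k : ℕ) (f : ℝ → ℝ) (s : Set ℝ) : Prop :=
  ∀ j < k, ∀ x ∈ s, ∀ y ∈ s,
    IntervalIntegrable (iteratedDerivWithin (j + 1) f s) volume x y ∧
    iteratedDerivWithin j f s y - iteratedDerivWithin j f s x =
      ∫ τ in x..y, iteratedDerivWithin (j + 1) f s τ

/-- The space `C^{k,β}_a`: functions `f` with `f ∈ AC^{k-1}` on the closure of `(a,t)` and
`Θ_{k,β,f,t}(τ) = f^{(k)}(τ) (t-τ)^{k-β-1} ∈ L¹((a,t))`, for every real `t > a`. -/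
def CkBeta (k : ℕ) (β : ℝ) (a : EReal) (f : ℝ → ℝ) : Prop :=
  ∀ t : ℝ, a < (t : EReal) →
    ACkOn k f (upBar a ∩ Iic t) ∧
    IntegrableOn (fun τ : ℝ => iteratedDeriv k f τ * (t - τ) ^ ((k : ℝ) - β - 1))
      (upSet a ∩ Iio t)

/-- The Caputo derivative `D_a^α u (t) = (1/Γ(k-α)) ∫_a^t u^{(k)}(τ) (t-τ)^{k-α-1} dτ`
of order `α ∈ (k-1,k)` and initial point `a ∈ ℝ ∪ {-∞}`. -/
def caputo (k : ℕ) (α : ℝ) (a : EReal) (u : ℝ → ℝ) (t : ℝ) : ℝ :=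
  (1 / Real.Gamma ((k : ℝ) - α)) *
    ∫ τ in upSet a ∩ Iio t, iteratedDeriv k u τ * (t - τ) ^ ((k : ℝ) - α - 1)

/-- The norm `‖g‖_{C^h([0,1])} = ∑_{j=0}^h sup_{t ∈ [0,1]} |g^{(j)}(t)|`. -/
def chNorm (h : ℕ) (g : ℝ → ℝ) : ℝ :=
  ∑ j ∈ Finset.range (h + 1),
    sSup ((fun t => |iteratedDerivWithin j g (Icc (0 : ℝ) 1) t|) '' Icc (0 : ℝ) 1)

/-- The operator `g ↦ (1/ψ') g'`. -/
def psiDeriv (ψ : ℝ → ℝ) (g : ℝ → ℝ) : ℝ → ℝ := fun τ => (deriv ψ τ)⁻¹ * deriv g τ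

/-- The `ψ`-Caputo derivative
`D_a^{α,ψ} u (t) = (1/Γ(k-α)) ∫_a^t u_ψ^{(k)}(τ) (ψ(t)-ψ(τ))^{k-α-1} ψ'(τ) dτ`
of order `α ∈ (k-1,k)` and initial point `a ∈ ℝ`, where `u_ψ^{(k)} = ((1/ψ') d/dτ)^k u`. -/
def caputoPsi (k : ℕ) (α : ℝ) (ψ : ℝ → ℝ) (a : ℝ) (u : ℝ → ℝ) (t : ℝ) : ℝ :=
  (1 / Real.Gamma ((k : ℝ) - α)) *
    ∫ τ in Ioo a t, (psiDeriv ψ)^[k] u τ * (ψ t - ψ τ) ^ ((k : ℝ) - α - 1) * deriv ψ τ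

end
section Aux

open MeasureTheory Set

lemma myIteratedDerivWithin_congr_set {f : ℝ → ℝ} {s t : Set ℝ} {x : ℝ} {n : ℕ}
    (h : s =ᶠ[nhds x] t) :
    iteratedDerivWithin n f s x = iteratedDerivWithin n f t x := by
  simp only [iteratedDerivWithin_eq_iteratedFDerivWithin,
    iteratedFDerivWithin_congr_set h n]

lemma myIteratedDerivWithin_of_isOpen {f : ℝ → ℝ} {s : Set ℝ} {x : ℝ} {n : ℕ}
    (hs : IsOpen s) (hx : x ∈ s) :
    iteratedDerivWithin n f s x = iteratedDeriv n f x := by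
  simp only [iteratedDerivWithin_eq_iteratedFDerivWithin, iteratedDeriv_eq_iteratedFDeriv,
    iteratedFDerivWithin_of_isOpen n hs hx]

end Aux


/-- equivalence between the homogeneous problem with initial point `a`
and the non-homogeneous problem with initial point `b` and memory source `g`
(Lemma 2.1 of the paper). -/
theorem caputo_memory_equiv (k : ℕ) (hk : 1 ≤ k) (α : ℝ)
    (hα : α ∈ Set.Ioo ((k : ℝ) - 1) (k : ℝ))
    (a b : ℝ) (hab : a < b) (φ : ℝ → ℝ) (hφ : ContDiffOn ℝ k φ (Set.Icc a b))
    (u : ℝ → ℝ) (hu : CkBeta k α (a : EReal) u) :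
    ((∀ t : ℝ, b < t → caputo k α (a : EReal) u t = 0) ∧
        ∀ t ∈ Set.Icc a b, u t = φ t) ↔
    ((∀ t : ℝ, b < t → caputo k α (b : EReal) u t =
        -(1 / Real.Gamma ((k : ℝ) - α)) *
          ∫ τ in Set.Ioo a b,
            iteratedDerivWithin k φ (Set.Icc a b) τ * (t - τ) ^ ((k : ℝ) - α - 1)) ∧
      ∀ t ∈ Set.Icc a b, u t = φ t) := by
  have hsetA : ∀ t : ℝ, upSet (a : EReal) ∩ Set.Iio t = Set.Ioo a t := by
    intro t; ext τ; simp [upSet, Set.mem_Ioo, EReal.coe_lt_coe_iff, and_comm]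
  have hsetB : ∀ t : ℝ, upSet (b : EReal) ∩ Set.Iio t = Set.Ioo b t := by
    intro t; ext τ; simp [upSet, Set.mem_Ioo, EReal.coe_lt_coe_iff, and_comm]
  -- key splitting identity
  have key : (∀ t ∈ Set.Icc a b, u t = φ t) → ∀ t : ℝ, b < t →
      caputo k α (a : EReal) u t = caputo k α (b : EReal) u t +
        (1 / Real.Gamma ((k : ℝ) - α)) *
          ∫ τ in Set.Ioo a b,
            iteratedDerivWithin k φ (Set.Icc a b) τ * (t - τ) ^ ((k : ℝ) - α - 1) := by
    intro huφ t ht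
    have hat : a < t := hab.trans ht
    set f : ℝ → ℝ := fun τ => iteratedDeriv k u τ * (t - τ) ^ ((k : ℝ) - α - 1) with hf
    have hInt : MeasureTheory.IntegrableOn f (Set.Ioo a t) := by
      have := (hu t (by exact_mod_cast hat)).2
      rwa [hsetA t] at this
    have hderiv : ∀ τ ∈ Set.Ioo a b,
        iteratedDeriv k u τ = iteratedDerivWithin k φ (Set.Icc a b) τ := by
      intro τ hτ
      have h1 : iteratedDeriv k u τ = iteratedDerivWithin k u (Set.Ioo a b) τ :=
        (myIteratedDerivWithin_of_isOpen isOpen_Ioo hτ).symm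
      have h2 : iteratedDerivWithin k u (Set.Ioo a b) τ =
          iteratedDerivWithin k φ (Set.Ioo a b) τ :=
        iteratedDerivWithin_congr
          (fun x hx => huφ x (Set.Ioo_subset_Icc_self hx)) hτ
      have h3 : Set.Ioo a b =ᶠ[nhds τ] Set.Icc a b := by
        filter_upwards [isOpen_Ioo.mem_nhds hτ] with x hx
        simp only [eq_iff_iff]
        exact ⟨fun h => Set.Ioo_subset_Icc_self h, fun _ => hx⟩
      rw [h1, h2, myIteratedDerivWithin_congr_set h3]
    have hsplit : ∫ τ in Set.Ioo a t, f τ =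
        (∫ τ in Set.Ioo a b, f τ) + ∫ τ in Set.Ico b t, f τ := by
      rw [← MeasureTheory.setIntegral_union
        (by simp [Set.disjoint_left]; intro x _ h2; exact fun h => absurd h (not_le.2 h2))
        measurableSet_Ico
        (hInt.mono_set (Set.Ioo_subset_Ioo le_rfl ht.le))
        (hInt.mono_set (fun x hx => ⟨hab.trans_le hx.1, hx.2⟩)),
        Set.Ioo_union_Ico_eq_Ioo hab ht.le]
    have hIco : ∫ τ in Set.Ico b t, f τ = ∫ τ in Set.Ioo b t, f τ :=
      (MeasureTheory.setIntegral_congr_set MeasureTheory.Ioo_ae_eq_Ico).symm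
    have hcongr : ∫ τ in Set.Ioo a b, f τ = ∫ τ in Set.Ioo a b,
        iteratedDerivWithin k φ (Set.Icc a b) τ * (t - τ) ^ ((k : ℝ) - α - 1) :=
      MeasureTheory.setIntegral_congr_fun measurableSet_Ioo
        (fun τ hτ => by rw [hf]; simp only; rw [hderiv τ hτ])
    simp only [caputo, hsetA, hsetB]
    rw [hsplit, hIco, hcongr]; ring
  constructor
  · rintro ⟨h1, h2⟩
    refine ⟨fun t ht => ?_, h2⟩
    have := key h2 t ht
    rw [h1 t ht] at this
    linarith
  · rintro ⟨h1, h2⟩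
    refine ⟨fun t ht => ?_, h2⟩
    have := key h2 t ht
    rw [h1 t ht] at this
    linarith
end

section
/- Let k ∈ ℕ with k ≥ 1, α ∈ (k−1, k), a ∈ ℝ, and let ψ ∈ Ψ_k be such that the composition u ∘ ψ^{−1} belongs to C^{k,α}_{ψ(a)}. Then for every t > a one has D_a^{α,ψ} u(t) = D_{ψ(a)}^α (u ∘ ψ^{−1})(ψ(t)). -/
open MeasureTheory Set

noncomputable section

open Filter in

lemma psiinv_hasDerivAt {ψ ψinv : ℝ → ℝ} (hψ : ContDiff ℝ 1 ψ)
    (hψ' : ∀ x : ℝ, 0 < deriv ψ x) (hinv : Function.LeftInverse ψinv ψ) (τ : ℝ) :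
    HasDerivAt ψinv (deriv ψ τ)⁻¹ (ψ τ) := by
  have hsd : HasStrictDerivAt ψ (deriv ψ τ) τ :=
    (hψ.contDiffAt.hasStrictDerivAt one_ne_zero)
  exact (hsd.to_local_left_inverse (hψ' τ).ne' (Filter.Eventually.of_forall fun x => hinv x)).hasDerivAt

lemma psiinv_right_inv {ψ ψinv : ℝ → ℝ} (hψ : ContDiff ℝ 1 ψ)
    (hψ' : ∀ x : ℝ, 0 < deriv ψ x) (hinv : Function.LeftInverse ψinv ψ) (τ : ℝ) :
    ∀ᶠ x in nhds (ψ τ), ψ (ψinv x) = x := by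
  have hsd : HasStrictDerivAt ψ (deriv ψ τ) τ :=
    (hψ.contDiffAt.hasStrictDerivAt one_ne_zero)
  rw [← hsd.map_nhds_eq (hψ' τ).ne', Filter.eventually_map]
  exact Filter.Eventually.of_forall fun y => by rw [hinv y]

lemma deriv_comp_psi {ψ ψinv : ℝ → ℝ} (hψ : ContDiff ℝ 1 ψ)
    (hψ' : ∀ x : ℝ, 0 < deriv ψ x) (hinv : Function.LeftInverse ψinv ψ)
    (h : ℝ → ℝ) (τ : ℝ) :
    deriv (fun x => h (ψ x)) τ = deriv h (ψ τ) * deriv ψ τ := by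
  have hψd : HasDerivAt ψ (deriv ψ τ) τ :=
    ((hψ.differentiable one_ne_zero) τ).hasDerivAt
  by_cases hd : DifferentiableAt ℝ h (ψ τ)
  · exact (hd.hasDerivAt.comp τ hψd).deriv
  · rw [deriv_zero_of_not_differentiableAt hd, zero_mul]
    apply deriv_zero_of_not_differentiableAt
    intro hcomp
    apply hd
    have hinvd : DifferentiableAt ℝ ψinv (ψ τ) :=
      (psiinv_hasDerivAt hψ hψ' hinv τ).differentiableAt
    have h1 : DifferentiableAt ℝ (fun x => h (ψ (ψinv x))) (ψ τ) := by
      have := DifferentiableAt.comp (ψ τ) (show DifferentiableAt ℝ (fun x => h (ψ x)) (ψinv (ψ τ)) by rw [hinv τ]; exact hcomp) hinvd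
      exact this
    have heq : (fun x => h (ψ (ψinv x))) =ᶠ[nhds (ψ τ)] h := by
      filter_upwards [psiinv_right_inv hψ hψ' hinv τ] with x hx
      rw [hx]
    exact (Filter.EventuallyEq.differentiableAt_iff heq).mp h1

lemma psiDeriv_iterate {ψ ψinv : ℝ → ℝ} (hψ : ContDiff ℝ 1 ψ)
    (hψ' : ∀ x : ℝ, 0 < deriv ψ x) (hinv : Function.LeftInverse ψinv ψ)
    (u : ℝ → ℝ) : ∀ n : ℕ, ∀ τ : ℝ,
      (psiDeriv ψ)^[n] u τ = iteratedDeriv n (u ∘ ψinv) (ψ τ) := by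
  intro n
  induction n with
  | zero => intro τ; simp [Function.comp, hinv τ]
  | succ n ih =>
    intro τ
    rw [Function.iterate_succ_apply']
    show (deriv ψ τ)⁻¹ * deriv ((psiDeriv ψ)^[n] u) τ = _
    have hfun : (psiDeriv ψ)^[n] u = fun x => iteratedDeriv n (u ∘ ψinv) (ψ x) :=
      funext ih
    rw [hfun, deriv_comp_psi hψ hψ' hinv, ← iteratedDeriv_succ]
    field_simp [(hψ' τ).ne']

end
/-- the `ψ`-Caputo derivative is the Caputo derivative of `u ∘ ψ⁻¹`
after the change of variables induced by `ψ` (Lemma 3.1 of the paper). -/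
theorem psi_caputo_change_of_variables (k : ℕ) (hk : 1 ≤ k) (α : ℝ)
    (hα : α ∈ Set.Ioo ((k : ℝ) - 1) (k : ℝ))
    (a : ℝ) (ψ : ℝ → ℝ) (hψ : ContDiff ℝ k ψ) (hψ' : ∀ x : ℝ, 0 < deriv ψ x)
    (ψinv : ℝ → ℝ) (hinv : Function.LeftInverse ψinv ψ)
    (u : ℝ → ℝ) (hu : CkBeta k α ((ψ a : ℝ) : EReal) (u ∘ ψinv)) :
    ∀ t : ℝ, a < t →
      caputoPsi k α ψ a u t = caputo k α ((ψ a : ℝ) : EReal) (u ∘ ψinv) (ψ t) := by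
  have hψ1 : ContDiff ℝ 1 ψ := hψ.of_le (by exact_mod_cast hk)
  intro t ht
  unfold caputoPsi caputo
  congr 1
  have hmono : StrictMono ψ := strictMono_of_deriv_pos hψ'
  have hset : upSet ((ψ a : ℝ) : EReal) ∩ Iio (ψ t) = Ioo (ψ a) (ψ t) := by
    ext x
    simp [upSet, Set.mem_Ioo, EReal.coe_lt_coe_iff, and_comm]
  rw [hset]
  have himg : ψ '' Ioo a t = Ioo (ψ a) (ψ t) := by
    apply Set.Subset.antisymm
    · rintro _ ⟨x, hx, rfl⟩
      exact ⟨hmono hx.1, hmono hx.2⟩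
    · exact intermediate_value_Ioo ht.le (hψ1.continuous.continuousOn)
  rw [← himg, integral_image_eq_integral_abs_deriv_smul measurableSet_Ioo
    (fun x _ => ((hψ1.differentiable one_ne_zero) x).hasDerivAt.hasDerivWithinAt)
    (hmono.injective.injOn) _]
  refine setIntegral_congr_fun measurableSet_Ioo fun τ _ => ?_
  simp only [smul_eq_mul, abs_of_pos (hψ' τ), psiDeriv_iterate hψ1 hψ' hinv u k τ]
  ring
end

section
/- Let k ∈ ℕ with k ≥ 1 and α ∈ (k−1, k). Let a ∈ ℝ ∪ {−∞} and b ∈ (a,+∞). Let f ∈ C^{k,α}_a and g ∈ C^{k,α}_b satisfy f^{(j)}(b) = g^{(j)}(b) for every j ∈ {0,…,k−1}. Define h on the closure of (a,+∞) by h(t) := f(t) if t ≤ b and h(t) := g(t) if t > b. Then h ∈ C^{k,α}_a. -/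
open MeasureTheory Set Filter Topology Interval

section gluingHelpers

lemma hasDerivWithinAt_of_ftc' {S : Set ℝ} (hS : S.OrdConnected) {φ Φ : ℝ → ℝ} {b : ℝ}
    (hb : b ∈ S)
    (hint : ∀ y ∈ S, IntervalIntegrable φ volume b y)
    (hftc : ∀ y ∈ S, Φ y - Φ b = ∫ τ in b..y, φ τ)
    (hcont : ContinuousWithinAt φ S b) :
    HasDerivWithinAt Φ (φ b) S b := by
  rw [hasDerivWithinAt_iff_isLittleO, Asymptotics.isLittleO_iff]
  intro ε hε
  rw [Metric.continuousWithinAt_iff] at hcont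
  obtain ⟨δ, hδ, hδε⟩ := hcont ε hε
  filter_upwards [self_mem_nhdsWithin,
    nhdsWithin_le_nhds (Metric.ball_mem_nhds b hδ)] with y hyS hyB
  have hIsub : Ι b y ⊆ S := fun τ hτ => hS.uIcc_subset hb hyS (uIoc_subset_uIcc hτ)
  have hyb : |y - b| < δ := by simpa [Real.dist_eq] using hyB
  have key : ∀ τ ∈ Ι b y, ‖φ τ - φ b‖ ≤ ε := by
    intro τ hτ
    have hd : |τ - b| ≤ |y - b| := by
      rcases le_total b y with h1 | h1
      · rw [uIoc_of_le h1] at hτ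
        rw [abs_of_nonneg (by linarith [hτ.1, hτ.2] : (0:ℝ) ≤ τ - b),
          abs_of_nonneg (by linarith [hτ.1, hτ.2] : (0:ℝ) ≤ y - b)]
        linarith [hτ.2]
      · rw [uIoc_of_ge h1] at hτ
        rw [abs_of_nonpos (by linarith [hτ.1, hτ.2] : τ - b ≤ (0:ℝ)),
          abs_of_nonpos (by linarith [hτ.1, hτ.2] : y - b ≤ (0:ℝ))]
        linarith [hτ.1]
    have := hδε (hIsub hτ) (by rw [Real.dist_eq]; exact lt_of_le_of_lt hd hyb)
    rw [Real.dist_eq] at this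
    simpa [Real.norm_eq_abs] using this.le
  have h1 : Φ y - Φ b - (y - b) • φ b = ∫ τ in b..y, (φ τ - φ b) := by
    rw [intervalIntegral.integral_sub (hint y hyS) intervalIntegrable_const,
      intervalIntegral.integral_const, hftc y hyS]
  rw [h1]
  simpa [Real.norm_eq_abs] using intervalIntegral.norm_integral_le_of_norm_le_const key

lemma continuousWithinAt_of_ftc' {S : Set ℝ} {φ Φ : ℝ → ℝ} {b c t : ℝ}
    (hcb : c < b) (hbt : b < t) (hb : b ∈ S)
    (hint : IntervalIntegrable φ volume c t)
    (hftc : ∀ y ∈ S, Φ y - Φ b = ∫ τ in b..y, φ τ) :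
    ContinuousWithinAt Φ S b := by
  have h0 : ContinuousWithinAt (fun y => ∫ τ in b..y, φ τ) (Icc c t) b := by
    apply intervalIntegral.continuousWithinAt_primitive (measure_singleton b)
    rwa [min_eq_right hcb.le, max_eq_right hbt.le]
  have h2 : ContinuousWithinAt (fun y => Φ b + ∫ τ in b..y, φ τ) S b :=
    (continuousWithinAt_const.add h0).mono_of_mem_nhdsWithin (mem_nhdsWithin.2
      ⟨Ioo c t, isOpen_Ioo, ⟨hcb, hbt⟩, fun x hx => ⟨hx.1.1.le, hx.1.2.le⟩⟩)
  exact h2.congr (fun y hy => by linarith [hftc y hy])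
    (by simp)

end gluingHelpers

/-- gluing a function of `C^{k,α}_a` with a function of `C^{k,α}_b`
matching the derivative jet of order `k-1` at `b` produces a function of `C^{k,α}_a`
(Lemma A.2 of the paper). -/
theorem caputo_space_gluing (k : ℕ) (hk : 1 ≤ k) (α : ℝ)
    (hα : α ∈ Set.Ioo ((k : ℝ) - 1) (k : ℝ))
    (a : EReal) (b : ℝ) (hab : a < (b : EReal))
    (f g : ℝ → ℝ) (hf : CkBeta k α a f) (hg : CkBeta k α (b : EReal) g)
    (hjet : ∀ j < k,
      iteratedDerivWithin j f (upBar a) b = iteratedDerivWithin j g (upBar (b : EReal)) b) :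
    CkBeta k α a (fun t => if t ≤ b then f t else g t) := by
  intro t ht
  set h : ℝ → ℝ := fun τ : ℝ => if τ ≤ b then f τ else g τ with hhdef
  obtain ⟨hfa, hfi⟩ := hf t ht
  set s : Set ℝ := upBar a ∩ Iic t with hsdef
  have hordup : ∀ t' : ℝ, (upBar a ∩ Iic t').OrdConnected := by
    intro t'
    constructor
    intro x hx y hy z hz
    exact ⟨le_trans hx.1 (EReal.coe_le_coe_iff.2 hz.1), le_trans hz.2 hy.2⟩
  have hord : s.OrdConnected := hordup t
  obtain ⟨c₀, hac₀, hc₀t⟩ := EReal.exists_between_coe_real ht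
  have hc₀t' : c₀ < t := EReal.coe_lt_coe_iff.1 hc₀t
  have hIoosub : Ioo c₀ t ⊆ s :=
    fun x hx => ⟨(hac₀.trans (EReal.coe_lt_coe_iff.2 hx.1)).le, hx.2.le⟩
  have hud : UniqueDiffOn ℝ s := by
    apply uniqueDiffOn_convex (convex_iff_ordConnected.2 hord)
    exact ⟨(c₀ + t)/2, interior_maximal hIoosub isOpen_Ioo (by constructor <;> linarith)⟩
  have hvb : (volume : Measure ℝ) {b} = 0 := measure_singleton b
  rcases le_or_gt t b with htb | hbt
  -- Case t ≤ b : h coincides with f on s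
  · have heq : EqOn h f s := fun τ hτ => if_pos (le_trans hτ.2 htb)
    have hiter : ∀ j : ℕ, EqOn (iteratedDerivWithin j h s) (iteratedDerivWithin j f s) s :=
      fun j => iteratedDerivWithin_congr heq
    constructor
    · intro j hj x hx y hy
      have hsub : uIcc x y ⊆ s := hord.uIcc_subset hx hy
      obtain ⟨hii, hint⟩ := hfa j hj x hx y hy
      constructor
      · rw [intervalIntegrable_iff] at hii ⊢
        exact hii.congr_fun
          (fun τ hτ => (hiter (j+1) (hsub (uIoc_subset_uIcc hτ))).symm) measurableSet_uIoc
      · rw [hiter j hx, hiter j hy,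
          intervalIntegral.integral_congr (fun τ hτ => hiter (j+1) (hsub hτ))]
        exact hint
    · have hE : IsOpen (upSet a ∩ Iio t) :=
        (isOpen_Ioi.preimage continuous_coe_real_ereal).inter isOpen_Iio
      apply hfi.congr_fun ?_ hE.measurableSet
      intro τ hτ
      have : iteratedDeriv k f τ = iteratedDeriv k h τ := by
        apply Filter.EventuallyEq.iteratedDeriv_eq
        filter_upwards [Iio_mem_nhds (lt_of_lt_of_le hτ.2 htb)] with τ' hτ'
        exact (if_pos hτ'.le).symm
      simp only [this]
  -- Case b < t : genuine gluing
  · obtain ⟨hga, hgi⟩ := hg t (EReal.coe_lt_coe_iff.2 hbt)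
    have hsbeq : upBar (b:EReal) ∩ Iic t = Icc b t := by
      ext τ
      simp only [upBar, mem_inter_iff, mem_setOf_eq, mem_Iic, mem_Icc, EReal.coe_le_coe_iff]
    rw [hsbeq] at hga
    have hupb : upSet (b:EReal) ∩ Iio t = Ioo b t := by
      ext τ; simp [upSet, EReal.coe_lt_coe_iff, and_comm]
    rw [hupb] at hgi
    obtain ⟨c, hac, hcb⟩ := EReal.exists_between_coe_real hab
    have hcb' : c < b := EReal.coe_lt_coe_iff.1 hcb
    have hbs : b ∈ s := ⟨hab.le, hbt.le⟩
    have hts : t ∈ s := ⟨ht.le, le_refl t⟩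
    have hcs : c ∈ s := ⟨hac.le, (hcb'.trans hbt).le⟩
    have hudb : UniqueDiffOn ℝ (Icc b t) := uniqueDiffOn_Icc hbt
    set H : ℕ → ℝ → ℝ :=
      fun j τ => if τ ≤ b then iteratedDerivWithin j f s τ
        else iteratedDerivWithin j g (Icc b t) τ with hH
    have hjet' : ∀ j < k,
        iteratedDerivWithin j f s b = iteratedDerivWithin j g (Icc b t) b := by
      intro j hj
      have h1 : s =ᶠ[𝓝 b] upBar a := by
        rw [Filter.eventuallyEq_set]
        filter_upwards [Iio_mem_nhds hbt] with x hx
        exact ⟨fun h' => h'.1, fun h' => ⟨h', mem_Iic.2 (le_of_lt (mem_Iio.1 hx))⟩⟩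
      have h2 : Icc b t =ᶠ[𝓝 b] upBar (b:EReal) := by
        rw [Filter.eventuallyEq_set]
        filter_upwards [Iio_mem_nhds hbt] with x hx
        simp only [mem_Icc, upBar, mem_setOf_eq, EReal.coe_le_coe_iff]
        exact ⟨fun h' => h'.1, fun h' => ⟨h', mem_Iic.2 (le_of_lt (mem_Iio.1 hx))⟩⟩
      calc iteratedDerivWithin j f s b = iteratedDerivWithin j f (upBar a) b := by
            simp only [iteratedDerivWithin_eq_iteratedFDerivWithin]
            rw [iteratedFDerivWithin_congr_set h1]
        _ = iteratedDerivWithin j g (upBar (b:EReal)) b := hjet j hj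
        _ = iteratedDerivWithin j g (Icc b t) b := by
            simp only [iteratedDerivWithin_eq_iteratedFDerivWithin]
            rw [iteratedFDerivWithin_congr_set h2]
    have AHb : ∀ j < k, ∀ y ∈ s, IntervalIntegrable (H (j+1)) volume b y ∧
        H j y - H j b = ∫ τ in b..y, H (j+1) τ := by
      intro j hj y hy
      rcases le_or_gt y b with hyb | hby
      · obtain ⟨hii, hiv⟩ := hfa j hj b hbs y hy
        have hsub : Ι b y ⊆ Iic b := by
          rw [uIoc_of_ge hyb]; exact Ioc_subset_Iic_self
        have hsub2 : uIcc b y ⊆ Iic b := by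
          rw [uIcc_of_ge hyb]; exact Icc_subset_Iic_self
        constructor
        · rw [intervalIntegrable_iff] at hii ⊢
          apply hii.congr_fun ?_ measurableSet_uIoc
          intro τ hτ
          simp only [hH]; rw [if_pos (mem_Iic.1 (hsub hτ))]
        · have h2 : EqOn (H (j+1)) (iteratedDerivWithin (j+1) f s) (uIcc b y) := by
            intro τ hτ
            simp only [hH]; rw [if_pos (mem_Iic.1 (hsub2 hτ))]
          rw [intervalIntegral.integral_congr h2]
          have hb' : H j b = iteratedDerivWithin j f s b := by
            simp only [hH]; rw [if_pos le_rfl]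
          have hy' : H j y = iteratedDerivWithin j f s y := by
            simp only [hH]; rw [if_pos hyb]
          rw [hb', hy']; exact hiv
      · have hyIcc : y ∈ Icc b t := ⟨hby.le, hy.2⟩
        obtain ⟨hii, hiv⟩ := hga j hj b (left_mem_Icc.2 hbt.le) y hyIcc
        have hIeq : Ι b y = Ioc b y := uIoc_of_le hby.le
        have hEq : EqOn (iteratedDerivWithin (j+1) g (Icc b t)) (H (j+1)) (Ioc b y) := by
          intro τ hτ
          simp only [hH]; rw [if_neg (not_le.2 hτ.1)]
        constructor
        · rw [intervalIntegrable_iff] at hii ⊢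
          rw [hIeq] at hii ⊢
          exact hii.congr_fun hEq measurableSet_Ioc
        · have h3 : ∫ τ in b..y, H (j+1) τ
              = ∫ τ in b..y, iteratedDerivWithin (j+1) g (Icc b t) τ := by
            rw [intervalIntegral.integral_of_le hby.le, intervalIntegral.integral_of_le hby.le]
            exact setIntegral_congr_fun measurableSet_Ioc (fun τ hτ => (hEq hτ).symm)
          rw [h3]
          have hb' : H j b = iteratedDerivWithin j g (Icc b t) b := by
            simp only [hH]; rw [if_pos le_rfl]; exact hjet' j hj
          have hy' : H j y = iteratedDerivWithin j g (Icc b t) y := by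
            simp only [hH]; rw [if_neg (not_le.2 hby)]
          rw [hb', hy']; exact hiv
    have AH : ∀ j < k, ∀ x ∈ s, ∀ y ∈ s, IntervalIntegrable (H (j+1)) volume x y ∧
        H j y - H j x = ∫ τ in x..y, H (j+1) τ := by
      intro j hj x hx y hy
      have h1 := AHb j hj x hx
      have h2 := AHb j hj y hy
      refine ⟨h1.1.symm.trans h2.1, ?_⟩
      have hadd := intervalIntegral.integral_add_adjacent_intervals h1.1.symm h2.1
      have hsymm : ∫ τ in x..b, H (j+1) τ = - ∫ τ in b..x, H (j+1) τ :=
        intervalIntegral.integral_symm b x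
      linarith [h1.2, h2.2]
    have Hcont : ∀ m < k, ContinuousWithinAt (H m) s b := by
      intro m hm
      exact continuousWithinAt_of_ftc' hcb' hbt hbs
        ((AHb m hm c hcs).1.symm.trans (AHb m hm t hts).1)
        (fun y hy => (AHb m hm y hy).2)
    have HderivB : ∀ j : ℕ, j + 1 < k → HasDerivWithinAt (H j) (H (j+1) b) s b := by
      intro j hj
      exact hasDerivWithinAt_of_ftc' hord hbs
        (fun y hy => (AHb j (Nat.lt_of_succ_lt hj) y hy).1)
        (fun y hy => (AHb j (Nat.lt_of_succ_lt hj) y hy).2) (Hcont (j+1) hj)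
    have stepOff : ∀ j : ℕ, EqOn (iteratedDerivWithin j h s) (H j) s →
        ∀ τ ∈ s, τ ≠ b → iteratedDerivWithin (j+1) h s τ = H (j+1) τ := by
      intro j hIH τ hτ hne
      rw [iteratedDerivWithin_succ, derivWithin_congr hIH (hIH hτ)]
      rcases lt_or_gt_of_ne hne with hlt | hgt
      · have h1 : H j =ᶠ[𝓝[s] τ] iteratedDerivWithin j f s := by
          filter_upwards [nhdsWithin_le_nhds (Iic_mem_nhds hlt)] with τ' hτ'
          simp only [hH]; rw [if_pos (mem_Iic.1 hτ')]
        have h0 : H j τ = iteratedDerivWithin j f s τ := by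
          simp only [hH]; rw [if_pos hlt.le]
        rw [h1.derivWithin_eq h0, ← iteratedDerivWithin_succ]
        simp only [hH]; rw [if_pos hlt.le]
      · have h1 : H j =ᶠ[𝓝[s] τ] iteratedDerivWithin j g (Icc b t) := by
          filter_upwards [nhdsWithin_le_nhds (Ioi_mem_nhds hgt)] with τ' hτ'
          simp only [hH]; rw [if_neg (not_le.2 (mem_Ioi.1 hτ'))]
        have h0 : H j τ = iteratedDerivWithin j g (Icc b t) τ := by
          simp only [hH]; rw [if_neg (not_le.2 hgt)]
        have hset : s =ᶠ[𝓝 τ] Icc b t := by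
          rw [Filter.eventuallyEq_set]
          filter_upwards [Ioi_mem_nhds hgt] with x hx
          simp only [hsdef, mem_inter_iff, mem_Iic, mem_Icc, upBar, mem_setOf_eq]
          exact ⟨fun h' => ⟨hx.le, h'.2⟩,
            fun h' => ⟨hab.le.trans (EReal.coe_le_coe_iff.2 h'.1), h'.2⟩⟩
        rw [h1.derivWithin_eq h0, derivWithin_congr_set hset,
          ← iteratedDerivWithin_succ]
        simp only [hH]; rw [if_neg (not_le.2 hgt)]
    have claim : ∀ j < k, EqOn (iteratedDerivWithin j h s) (H j) s := by
      intro j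
      induction j with
      | zero =>
        intro _ τ hτ
        simp only [iteratedDerivWithin_zero, hH, hhdef]
      | succ j IH =>
        intro hj τ hτ
        have hj' : j < k := Nat.lt_of_succ_lt hj
        rcases eq_or_ne τ b with rfl | hne
        · rw [iteratedDerivWithin_succ, derivWithin_congr (IH hj') (IH hj' hτ)]
          exact (HderivB j hj).derivWithin (hud τ hτ)
        · exact stepOff j (IH hj') τ hτ hne
    have claimK : ∀ τ ∈ s, τ ≠ b → iteratedDerivWithin k h s τ = H k τ := by
      obtain ⟨k', rfl⟩ : ∃ k', k = k' + 1 := ⟨k - 1, (Nat.succ_pred_eq_of_pos hk).symm⟩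
      exact stepOff k' (claim k' (Nat.lt_succ_self k'))
    have haeg : ∀ m ≤ k, ∀ x ∈ s, ∀ y ∈ s,
        ∀ᵐ τ ∂(volume.restrict (Ι x y)), iteratedDerivWithin m h s τ = H m τ := by
      intro m hm x hx y hy
      have hneb : ∀ᵐ τ : ℝ ∂volume, τ ≠ b := by
        rw [ae_iff]
        simpa [not_ne_iff, Set.setOf_eq_eq_singleton] using hvb
      filter_upwards [ae_restrict_of_ae hneb, ae_restrict_mem measurableSet_uIoc]
        with τ h1 h2
      have hτs : τ ∈ s := hord.uIcc_subset hx hy (uIoc_subset_uIcc h2)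
      rcases lt_or_eq_of_le hm with hlt | rfl
      · exact claim m hlt hτs
      · exact claimK τ hτs h1
    refine ⟨?_, ?_⟩
    · intro j hj x hx y hy
      obtain ⟨hii, hiv⟩ := AH j hj x hx y hy
      constructor
      · rw [intervalIntegrable_iff] at hii ⊢
        exact hii.congr_fun_ae (Filter.EventuallyEq.symm (haeg (j+1) hj x hx y hy))
      · rw [claim j hj hy, claim j hj hx,
          intervalIntegral.integral_congr_ae
            ((ae_restrict_iff' measurableSet_uIoc).1 (haeg (j+1) hj x hx y hy))]
        exact hiv
    · have hEopen : IsOpen (upSet a ∩ Iio t) :=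
        (isOpen_Ioi.preimage continuous_coe_real_ereal).inter isOpen_Iio
      have hleft : IntegrableOn
          (fun τ => iteratedDeriv k h τ * (t - τ) ^ ((k:ℝ) - α - 1))
          (upSet a ∩ Iio t ∩ Iio b) volume := by
        apply (hfi.mono_set inter_subset_left).congr_fun ?_
          (hEopen.inter isOpen_Iio).measurableSet
        intro τ hτ
        have : iteratedDeriv k f τ = iteratedDeriv k h τ := by
          apply Filter.EventuallyEq.iteratedDeriv_eq
          filter_upwards [Iio_mem_nhds hτ.2] with τ' hτ'
          rw [hhdef]; simp only []
          rw [if_pos hτ'.le]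
        simp only [this]
      have hright : IntegrableOn
          (fun τ => iteratedDeriv k h τ * (t - τ) ^ ((k:ℝ) - α - 1))
          (Ico b t) volume := by
        have h1 : IntegrableOn
            (fun τ => iteratedDeriv k h τ * (t - τ) ^ ((k:ℝ) - α - 1))
            (Ioo b t) volume := by
          apply hgi.congr_fun ?_ measurableSet_Ioo
          intro τ hτ
          have : iteratedDeriv k g τ = iteratedDeriv k h τ := by
            apply Filter.EventuallyEq.iteratedDeriv_eq
            filter_upwards [Ioi_mem_nhds hτ.1] with τ' hτ'
            rw [hhdef]; simp only []
            rw [if_neg (not_le.2 hτ')]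
          simp only [this]
        exact h1.congr_set_ae (MeasureTheory.Ioo_ae_eq_Ico).symm
      apply (hleft.union hright).mono_set
      intro τ hτ
      rcases lt_or_ge τ b with h' | h'
      · exact Or.inl ⟨hτ, h'⟩
      · exact Or.inr ⟨h', hτ.2⟩
end

section
/- Let k ∈ ℕ with k ≥ 1 and α ∈ (k−1, k). Let a ∈ ℝ ∪ {−∞}, b ∈ (a,+∞), and let I be an interval compactly contained in (b,+∞). Assume u ∈ C^{k,α}_b and define u⋆(t) := u(t) for t ∈ [b,+∞) and u⋆(t) := Σ_{j=0}^{k−1} (u^{(j)}(b)/j!)(t−b)^j for t ∈ (−∞, b) (the Taylor polynomial of u at b of degree k−1). Then u⋆ ∈ C^{k,α}_a and D^α_a u⋆(t) = D^α_b u(t) for every t ∈ I. -/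
open MeasureTheory Set

namespace CaputoAux

open Filter MeasureTheory Set intervalIntegral

lemma upSet_coe (b : ℝ) : upSet (b : EReal) = Ioi b := by
  ext τ; exact EReal.coe_lt_coe_iff

lemma upBar_coe (b : ℝ) : upBar (b : EReal) = Ici b := by
  ext τ; exact EReal.coe_le_coe_iff

lemma upSet_bot : upSet ⊥ = univ := by
  ext τ; simp [upSet]

lemma upBar_bot : upBar ⊥ = univ := by
  ext τ; simp [upBar]

lemma isOpen_upSet (a : EReal) : IsOpen (upSet a) :=
  IsOpen.preimage continuous_coe_real_ereal isOpen_Ioi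

lemma upBar_mem_nhds {a : EReal} {τ : ℝ} (h : a < (τ : EReal)) : upBar a ∈ nhds τ :=
  Filter.mem_of_superset ((isOpen_upSet a).mem_nhds h) (fun x hx => (le_of_lt (hx : a < (x:EReal)) : a ≤ (x:EReal)))

lemma ae_ne_point (y : ℝ) : ∀ᵐ τ : ℝ, τ ≠ y := by
  rw [MeasureTheory.ae_iff]
  simp only [ne_eq, not_not, setOf_eq_eq_singleton]
  exact measure_singleton y

/-- Polynomial family: `Qf K b c m` is the `m`-th derivative of
`τ ↦ ∑_{i<K} c i (τ-b)^i`. -/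
def Qf (K : ℕ) (b : ℝ) (c : ℕ → ℝ) (m : ℕ) : ℝ → ℝ :=
  fun τ => ∑ i ∈ Finset.range K, c i * (i.descFactorial m : ℝ) * (τ - b) ^ (i - m)

lemma continuous_Qf (K : ℕ) (b : ℝ) (c : ℕ → ℝ) (m : ℕ) : Continuous (Qf K b c m) := by
  unfold Qf
  exact continuous_finset_sum _ fun i _ => by fun_prop

lemma hasDerivAt_Qf (K : ℕ) (b : ℝ) (c : ℕ → ℝ) (m : ℕ) (τ : ℝ) :
    HasDerivAt (Qf K b c m) (Qf K b c (m + 1) τ) τ := by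
  unfold Qf
  apply HasDerivAt.fun_sum
  intro i _
  have h1 : HasDerivAt (fun τ : ℝ => (τ - b) ^ (i - m))
      (((i - m : ℕ) : ℝ) * (τ - b) ^ (i - m - 1)) τ := by
    simpa using ((hasDerivAt_id τ).sub_const b).fun_pow (i - m)
  have h2 := h1.const_mul (c i * (i.descFactorial m : ℝ))
  refine h2.congr_deriv ?_
  rw [Nat.descFactorial_succ, ← Nat.sub_sub]
  push_cast
  ring

lemma iteratedDeriv_Qf (K : ℕ) (b : ℝ) (c : ℕ → ℝ) (m : ℕ) :
    iteratedDeriv m (Qf K b c 0) = Qf K b c m := by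
  induction m with
  | zero => simp [iteratedDeriv_zero]
  | succ n ih =>
    rw [iteratedDeriv_succ, ih]
    funext τ
    exact (hasDerivAt_Qf K b c n τ).deriv

lemma Qf_eq_zero (K : ℕ) (b : ℝ) (c : ℕ → ℝ) (m : ℕ) (hm : K ≤ m) :
    Qf K b c m = fun _ => 0 := by
  funext τ
  exact Finset.sum_eq_zero fun i hi => by
    rw [Nat.descFactorial_eq_zero_iff_lt.mpr (lt_of_lt_of_le (Finset.mem_range.mp hi) hm)]
    simp

lemma Qf_apply_b (K : ℕ) (b : ℝ) (c : ℕ → ℝ) (m : ℕ) (hm : m < K) :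
    Qf K b c m b = c m * (m.factorial : ℝ) := by
  unfold Qf
  rw [Finset.sum_eq_single m]
  · simp [Nat.descFactorial_self]
  · intro i hi hne
    rcases lt_or_gt_of_ne hne with h | h
    · rw [Nat.descFactorial_eq_zero_iff_lt.mpr h]; simp
    · rw [sub_self, zero_pow (by omega : i - m ≠ 0)]; ring
  · intro h; exact absurd (Finset.mem_range.mpr hm) h

lemma Qf_zero_eq (K : ℕ) (b : ℝ) (c : ℕ → ℝ) :
    Qf K b c 0 = fun τ => ∑ i ∈ Finset.range K, c i * (τ - b) ^ i := by
  funext τ; unfold Qf; simp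

lemma primitive_hasDerivWithinAt {f : ℝ → ℝ} {b t : ℝ} (hbt : b < t)
    (hint : IntervalIntegrable f volume b t) (hc : ContinuousOn f (Icc b t))
    {τ : ℝ} (hτ : τ ∈ Icc b t) :
    HasDerivWithinAt (fun y => ∫ x in b..y, f x) (f τ) (Icc b t) τ := by
  have hmeasIcc : AEStronglyMeasurable f (volume.restrict (Icc b t)) :=
    hc.aestronglyMeasurable measurableSet_Icc
  have hint' : IntervalIntegrable f volume b τ := by
    apply hint.mono_set
    rw [uIcc_of_le hτ.1, uIcc_of_le hbt.le]
    exact Icc_subset_Icc le_rfl hτ.2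
  have hright : τ < t → HasDerivWithinAt (fun y => ∫ x in b..y, f x) (f τ) (Ici τ) τ := by
    intro hlt
    have hmem : Icc b t ∈ nhdsWithin τ (Ioi τ) :=
      mem_nhdsWithin.mpr ⟨Iio t, isOpen_Iio, hlt,
        fun x hx => ⟨le_trans hτ.1 (le_of_lt hx.2), le_of_lt hx.1⟩⟩
    exact intervalIntegral.integral_hasDerivWithinAt_right (s := Ici τ) (t := Ioi τ) hint'
      ⟨Icc b t, hmem, hmeasIcc⟩ ((hc τ hτ).mono_of_mem_nhdsWithin hmem)
  have hleft : b < τ → HasDerivWithinAt (fun y => ∫ x in b..y, f x) (f τ) (Iic τ) τ := by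
    intro hlt
    have hmem : Icc b t ∈ nhdsWithin τ (Iic τ) :=
      mem_nhdsWithin.mpr ⟨Ioi b, isOpen_Ioi, hlt,
        fun x hx => ⟨le_of_lt hx.1, le_trans hx.2 hτ.2⟩⟩
    exact intervalIntegral.integral_hasDerivWithinAt_right (s := Iic τ) (t := Iic τ) hint'
      ⟨Icc b t, hmem, hmeasIcc⟩ ((hc τ hτ).mono_of_mem_nhdsWithin hmem)
  rcases eq_or_lt_of_le hτ.1 with h1 | h1
  · exact (hright (h1 ▸ hbt)).mono (h1 ▸ Icc_subset_Ici_self)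
  rcases eq_or_lt_of_le hτ.2 with h2 | h2
  · exact (hleft h1).mono (by rw [h2]; exact Icc_subset_Iic_self)
  · exact ((hright h2).union (hleft h1)).mono (fun x _ => le_total τ x)

lemma glue_main (k : ℕ) (hk : 1 ≤ k) (b t : ℝ) (hbt : b < t) (u : ℝ → ℝ) (c : ℕ → ℝ)
    (hAC : ACkOn k u (Icc b t))
    (hQb : ∀ j, j < k → Qf k b c j b = iteratedDerivWithin j u (Icc b t) b)
    (s : Set ℝ) (hsub : Icc b t ⊆ s) (hst : s ⊆ Iic t)
    (hconn : s.OrdConnected) (hud : UniqueDiffOn ℝ s)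
    (hnh : ∀ x ∈ s, ∀ τ : ℝ, x < τ → τ < t → s ∈ nhds τ) :
    ACkOn k (fun τ => if b ≤ τ then u τ else Qf k b c 0 τ) s := by
  set U : ℕ → ℝ → ℝ := fun j => iteratedDerivWithin j u (Icc b t) with hU
  set P : ℕ → ℝ → ℝ := Qf k b c with hP
  set w : ℕ → ℝ → ℝ := fun j τ => if b ≤ τ then U j τ else P j τ with hw
  set g : ℝ → ℝ := fun τ => if b ≤ τ then u τ else Qf k b c 0 τ with hg
  have hbmem : b ∈ Icc b t := ⟨le_rfl, hbt.le⟩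
  have htmem : t ∈ Icc b t := ⟨hbt.le, le_rfl⟩
  have hudI : UniqueDiffOn ℝ (Icc b t) := uniqueDiffOn_Icc hbt
  have hII : ∀ j, j < k → ∀ x ∈ Icc b t, ∀ y ∈ Icc b t,
      IntervalIntegrable (U (j+1)) volume x y :=
    fun j hj x hx y hy => (hAC j hj x hx y hy).1
  have hFTC : ∀ j, j < k → ∀ x ∈ Icc b t, ∀ y ∈ Icc b t,
      U j y - U j x = ∫ τ in x..y, U (j+1) τ :=
    fun j hj x hx y hy => (hAC j hj x hx y hy).2
  have hUrep : ∀ j, j < k → ∀ y ∈ Icc b t, U j y = U j b + ∫ τ in b..y, U (j+1) τ := by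
    intro j hj y hy
    have h := hFTC j hj b hbmem y hy
    linarith
  have hUcont : ∀ j, j < k → ContinuousOn (U j) (Icc b t) := by
    intro j hj
    have hint : IntegrableOn (U (j+1)) (uIcc b t) volume := by
      rw [uIcc_of_le hbt.le]
      exact (intervalIntegrable_iff_integrableOn_Icc_of_le hbt.le).1 (hII j hj b hbmem t htmem)
    have hcontP : ContinuousOn (fun y => U j b + ∫ τ in b..y, U (j+1) τ) (Icc b t) := by
      have h2 := intervalIntegral.continuousOn_primitive_interval hint
      rw [uIcc_of_le hbt.le] at h2
      exact continuousOn_const.add h2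
    exact hcontP.congr (fun y hy => hUrep j hj y hy)
  have hUderiv : ∀ j, j + 1 < k → ∀ τ ∈ Icc b t,
      HasDerivWithinAt (U j) (U (j+1) τ) (Icc b t) τ := by
    intro j hj τ hτ
    have hj' : j < k := Nat.lt_of_succ_lt hj
    have hprim := primitive_hasDerivWithinAt hbt (hII j hj' b hbmem t htmem)
      (hUcont (j+1) hj) hτ
    exact (hprim.const_add (U j b)).congr (fun y hy => hUrep j hj' y hy) (hUrep j hj' τ hτ)
  have hwb : ∀ j, j < k → P j b = U j b := fun j hj => hQb j hj
  have hwleb : ∀ j, j < k → ∀ z, z ≤ b → w j z = P j z := by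
    intro j hj z hz
    rcases eq_or_lt_of_le hz with rfl | hz'
    · simp only [hw]; rw [if_pos le_rfl]; exact (hwb j hj).symm
    · simp only [hw]; rw [if_neg (not_le.mpr hz')]
  have hweq0 : g = w 0 := by
    funext τ
    simp only [hg, hw, hU, hP, iteratedDerivWithin_zero]
  have hwd : ∀ j, j + 1 < k → ∀ τ ∈ s, HasDerivWithinAt (w j) (w (j+1) τ) s τ := by
    intro j hj τ hτ
    have hjk : j < k := Nat.lt_of_succ_lt hj
    rcases lt_trichotomy τ b with hlt | heq | hgt
    · have hev : w j =ᶠ[nhdsWithin τ s] P j :=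
        Filter.eventuallyEq_of_mem (nhdsWithin_le_nhds (Iio_mem_nhds hlt))
          (fun x hx => by simp only [hw]; rw [if_neg (not_le.mpr hx)])
      have hval : w (j+1) τ = P (j+1) τ := by simp only [hw]; rw [if_neg (not_le.mpr hlt)]
      rw [hval]
      exact (hasDerivAt_Qf k b c j τ).hasDerivWithinAt.congr_of_eventuallyEq hev
        (by simp only [hw]; rw [if_neg (not_le.mpr hlt)])
    · rw [heq] at hτ ⊢
      have hl : HasDerivWithinAt (w j) (P (j+1) b) (s ∩ Iic b) b := by
        apply (hasDerivAt_Qf k b c j b).hasDerivWithinAt.congr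
        · intro x hx
          exact hwleb j hjk x hx.2
        · exact hwleb j hjk b le_rfl
      have hr : HasDerivWithinAt (w j) (U (j+1) b) (s ∩ Ici b) b := by
        apply ((hUderiv j hj b ⟨le_rfl, hbt.le⟩).mono
          (fun x hx => ⟨hx.2, hst hx.1⟩)).congr
        · intro x hx; simp only [hw]; rw [if_pos (mem_Ici.mp hx.2)]
        · simp only [hw]; rw [if_pos le_rfl]
      have hPU : P (j+1) b = U (j+1) b := hwb (j+1) hj
      rw [hPU] at hl
      have hval : w (j+1) b = U (j+1) b := by simp only [hw]; rw [if_pos le_rfl]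
      rw [hval]
      have hcup := hl.union hr
      have hset : (s ∩ Iic b) ∪ (s ∩ Ici b) = s := by
        rw [← inter_union_distrib_left, Iic_union_Ici, inter_univ]
      rwa [hset] at hcup
    · have hτt : τ ≤ t := hst hτ
      have hIccmem : Icc b t ∈ nhdsWithin τ s :=
        mem_nhdsWithin.mpr ⟨Ioi b, isOpen_Ioi, hgt, fun x hx => ⟨le_of_lt hx.1, hst hx.2⟩⟩
      have h0 := (hUderiv j hj τ ⟨hgt.le, hτt⟩).mono_of_mem_nhdsWithin hIccmem
      have hev : w j =ᶠ[nhdsWithin τ s] U j :=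
        Filter.eventuallyEq_of_mem (nhdsWithin_le_nhds (Ioi_mem_nhds hgt))
          (fun x hx => by simp only [hw]; rw [if_pos (le_of_lt hx)])
      have hval : w (j+1) τ = U (j+1) τ := by simp only [hw]; rw [if_pos hgt.le]
      rw [hval]
      exact h0.congr_of_eventuallyEq hev (by simp only [hw]; rw [if_pos hgt.le])
  have hwEq : ∀ j, j < k → Set.EqOn (iteratedDerivWithin j g s) (w j) s := by
    intro j
    induction j with
    | zero => intro _ τ hτ; rw [iteratedDerivWithin_zero, hweq0]
    | succ n ih =>
      intro hn τ hτ
      have hn' : n < k := Nat.lt_of_succ_lt hn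
      rw [iteratedDerivWithin_succ, derivWithin_congr (ih hn') (ih hn' hτ)]
      exact (hwd n hn τ hτ).derivWithin (hud τ hτ)
  have hwcont : ∀ j, j < k → ContinuousOn (w j) s := by
    intro j hj τ hτ
    rcases lt_trichotomy τ b with hlt | heq | hgt
    · have hev : w j =ᶠ[nhdsWithin τ s] P j :=
        Filter.eventuallyEq_of_mem (nhdsWithin_le_nhds (Iio_mem_nhds hlt))
          (fun x hx => by simp only [hw]; rw [if_neg (not_le.mpr hx)])
      exact ((continuous_Qf k b c j).continuousAt.continuousWithinAt).congr_of_eventuallyEq hev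
        (by simp only [hw]; rw [if_neg (not_le.mpr hlt)])
    · rw [heq] at hτ ⊢
      have hl : ContinuousWithinAt (w j) (s ∩ Iic b) b := by
        apply ((continuous_Qf k b c j).continuousAt.continuousWithinAt).congr
        · intro x hx; exact hwleb j hj x hx.2
        · exact hwleb j hj b le_rfl
      have hr : ContinuousWithinAt (w j) (s ∩ Ici b) b := by
        have hmem : Icc b t ∈ nhdsWithin b (s ∩ Ici b) :=
          mem_nhdsWithin.mpr ⟨Iio t, isOpen_Iio, hbt, fun x hx => ⟨hx.2.2, le_of_lt hx.1⟩⟩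
        apply ((hUcont j hj b hbmem).mono_of_mem_nhdsWithin hmem).congr
        · intro x hx; simp only [hw]; rw [if_pos (mem_Ici.mp hx.2)]
        · simp only [hw]; rw [if_pos le_rfl]
      have hcup := hl.union hr
      have hset : (s ∩ Iic b) ∪ (s ∩ Ici b) = s := by
        rw [← inter_union_distrib_left, Iic_union_Ici, inter_univ]
      rwa [hset] at hcup
    · have hτt : τ ≤ t := hst hτ
      have hIccmem : Icc b t ∈ nhdsWithin τ s :=
        mem_nhdsWithin.mpr ⟨Ioi b, isOpen_Ioi, hgt, fun x hx => ⟨le_of_lt hx.1, hst hx.2⟩⟩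
      have hev : w j =ᶠ[nhdsWithin τ s] U j :=
        Filter.eventuallyEq_of_mem (nhdsWithin_le_nhds (Ioi_mem_nhds hgt))
          (fun x hx => by simp only [hw]; rw [if_pos (le_of_lt hx)])
      exact ((hUcont j hj τ ⟨hgt.le, hτt⟩).mono_of_mem_nhdsWithin hIccmem).congr_of_eventuallyEq
        hev (by simp only [hw]; rw [if_pos hgt.le])
  intro j hj x hx y hy
  have huIcc : uIcc x y ⊆ s := hconn.uIcc_subset hx hy
  have hmemIoo : ∀ τ ∈ Ioo (min x y) (max x y), τ ∈ s := by
    intro τ hτ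
    rcases le_total x y with h | h
    · exact hconn.out hx hy ⟨le_of_lt (by simpa [min_eq_left h] using hτ.1),
        le_of_lt (by simpa [max_eq_right h] using hτ.2)⟩
    · exact hconn.out hy hx ⟨le_of_lt (by simpa [min_eq_right h] using hτ.1),
        le_of_lt (by simpa [max_eq_left h] using hτ.2)⟩
  rcases lt_or_eq_of_le (Nat.succ_le_of_lt hj) with hjk | hjk
  · -- j + 1 < k
    have hcont1 : ContinuousOn (iteratedDerivWithin (j+1) g s) (uIcc x y) :=
      ((hwcont (j+1) hjk).mono huIcc).congr (fun τ hτ => hwEq (j+1) hjk (huIcc hτ))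
    refine ⟨hcont1.intervalIntegrable, ?_⟩
    rw [hwEq j hj hx, hwEq j hj hy,
      intervalIntegral.integral_congr (fun τ hτ => hwEq (j+1) hjk (huIcc hτ))]
    have hmins : min x y ∈ s := huIcc ⟨le_rfl, min_le_max⟩
    have hmaxt : max x y ≤ t := max_le (hst hx) (hst hy)
    have hder : ∀ τ ∈ Ioo (min x y) (max x y), HasDerivWithinAt (w j) (w (j+1) τ) (Ioi τ) τ := by
      intro τ hτ
      have hτs : τ ∈ s := hmemIoo τ hτ
      have hns : s ∈ nhds τ := hnh (min x y) hmins τ hτ.1 (lt_of_lt_of_le hτ.2 hmaxt)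
      exact (((hwd j hjk τ hτs).hasDerivAt hns).hasDerivWithinAt)
    exact (intervalIntegral.integral_eq_sub_of_hasDeriv_right ((hwcont j hj).mono huIcc)
      hder (((hwcont (j+1) hjk).mono huIcc).intervalIntegrable)).symm
  · -- j + 1 = k
    have hjk' : j + 1 = k := by omega
    have hPconst : ∀ x' y' : ℝ, P j x' = P j y' := by
      have hdiff : Differentiable ℝ (P j) := fun τ => (hasDerivAt_Qf k b c j τ).differentiableAt
      have hder0 : ∀ τ, deriv (P j) τ = 0 := by
        intro τ
        rw [(hasDerivAt_Qf k b c j τ).deriv, hjk', Qf_eq_zero k b c k le_rfl]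
      exact fun x' y' => is_const_of_deriv_eq_zero hdiff hder0 x' y'
    have hFk : ∀ τ ∈ s, ∀ x' ∈ s, x' < τ → τ < t →
        ((τ < b → iteratedDerivWithin (j+1) g s τ = 0) ∧
         (b < τ → iteratedDerivWithin (j+1) g s τ = U (j+1) τ)) := by
      intro τ hτ x' hx' hlt hltt
      have hns : s ∈ nhds τ := hnh x' hx' τ hlt hltt
      have h1 : iteratedDerivWithin (j+1) g s τ = deriv (w j) τ := by
        rw [iteratedDerivWithin_succ, derivWithin_congr (hwEq j hj) (hwEq j hj hτ),
          derivWithin_of_mem_nhds hns]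
      constructor
      · intro hτb
        have hev : w j =ᶠ[nhds τ] P j :=
          Filter.eventuallyEq_of_mem (Iio_mem_nhds hτb)
            (fun x hx => by simp only [hw]; rw [if_neg (not_le.mpr hx)])
        rw [h1, hev.deriv_eq, (hasDerivAt_Qf k b c j τ).deriv, hjk', Qf_eq_zero k b c k le_rfl]
      · intro hbτ
        have hev : w j =ᶠ[nhds τ] U j :=
          Filter.eventuallyEq_of_mem (Ioi_mem_nhds hbτ)
            (fun x hx => by simp only [hw]; rw [if_pos (le_of_lt hx)])
        have hIccn : Icc b t ∈ nhds τ :=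
          Filter.mem_of_superset (Ioo_mem_nhds hbτ hltt) Ioo_subset_Icc_self
        rw [h1, hev.deriv_eq, ← derivWithin_of_mem_nhds hIccn]
        exact (congrFun iteratedDerivWithin_succ τ).symm
    have H1 : ∀ x' ∈ s, ∀ y' ∈ s, x' ≤ y' → y' ≤ b →
        IntervalIntegrable (iteratedDerivWithin (j+1) g s) volume x' y' ∧
        w j y' - w j x' = ∫ τ in x'..y', iteratedDerivWithin (j+1) g s τ := by
      intro x' hx' y' hy' hxy hyb
      have hzero : ∀ τ ∈ Ioo x' y', iteratedDerivWithin (j+1) g s τ = 0 := by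
        intro τ hτ
        exact (hFk τ (hconn.out hx' hy' ⟨hτ.1.le, hτ.2.le⟩) x' hx' hτ.1
          (lt_of_lt_of_le hτ.2 (le_trans hyb hbt.le))).1 (lt_of_lt_of_le hτ.2 hyb)
      have haeimp : ∀ᵐ τ : ℝ, τ ∈ Set.uIoc x' y' → iteratedDerivWithin (j+1) g s τ = 0 := by
        filter_upwards [ae_ne_point y'] with τ hne hmem
        rw [Set.uIoc_of_le hxy] at hmem
        exact hzero τ ⟨hmem.1, lt_of_le_of_ne hmem.2 hne⟩
      have hint : IntervalIntegrable (iteratedDerivWithin (j+1) g s) volume x' y' := by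
        refine ⟨?_, ?_⟩
        · have hae : (fun _ => (0:ℝ)) =ᵐ[volume.restrict (Ioc x' y')]
              iteratedDerivWithin (j+1) g s := by
            rw [Filter.EventuallyEq, ae_restrict_iff' measurableSet_Ioc]
            filter_upwards [haeimp] with τ him hmem
            rw [(him (by rwa [Set.uIoc_of_le hxy]))]
          exact (integrable_zero _ _ _).congr hae
        · rw [Ioc_eq_empty (not_lt.mpr hxy)]
          exact integrableOn_empty
      refine ⟨hint, ?_⟩
      have hI0 : ∫ τ in x'..y', iteratedDerivWithin (j+1) g s τ = ∫ τ in x'..y', (0:ℝ) :=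
        intervalIntegral.integral_congr_ae haeimp
      rw [hI0, intervalIntegral.integral_zero, hwleb j hj x' (le_trans hxy hyb),
        hwleb j hj y' hyb, hPconst y' x', sub_self]
    have H2 : ∀ x' ∈ s, ∀ y' ∈ s, b ≤ x' → x' ≤ y' →
        IntervalIntegrable (iteratedDerivWithin (j+1) g s) volume x' y' ∧
        w j y' - w j x' = ∫ τ in x'..y', iteratedDerivWithin (j+1) g s τ := by
      intro x' hx' y' hy' hbx hxy
      have hx'I : x' ∈ Icc b t := ⟨hbx, hst hx'⟩
      have hy'I : y' ∈ Icc b t := ⟨le_trans hbx hxy, hst hy'⟩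
      have haeimp : ∀ᵐ τ : ℝ, τ ∈ Set.uIoc x' y' →
          iteratedDerivWithin (j+1) g s τ = U (j+1) τ := by
        filter_upwards [ae_ne_point y'] with τ hne hmem
        rw [Set.uIoc_of_le hxy] at hmem
        have hτo : τ ∈ Ioo x' y' := ⟨hmem.1, lt_of_le_of_ne hmem.2 hne⟩
        have hτs : τ ∈ s := hconn.out hx' hy' ⟨hτo.1.le, hτo.2.le⟩
        exact (hFk τ hτs x' hx' hτo.1 (lt_of_lt_of_le hτo.2 (hst hy'))).2
          (lt_of_le_of_lt hbx hτo.1)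
      have hintU := hII j hj x' hx'I y' hy'I
      have hint : IntervalIntegrable (iteratedDerivWithin (j+1) g s) volume x' y' := by
        refine ⟨?_, ?_⟩
        · have hae : U (j+1) =ᵐ[volume.restrict (Ioc x' y')]
              iteratedDerivWithin (j+1) g s := by
            rw [Filter.EventuallyEq, ae_restrict_iff' measurableSet_Ioc]
            filter_upwards [haeimp] with τ him hmem
            rw [him (by rwa [Set.uIoc_of_le hxy])]
          exact hintU.1.congr hae
        · rw [Ioc_eq_empty (not_lt.mpr hxy)]
          exact integrableOn_empty
      refine ⟨hint, ?_⟩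
      have hIeq : ∫ τ in x'..y', iteratedDerivWithin (j+1) g s τ = ∫ τ in x'..y', U (j+1) τ :=
        intervalIntegral.integral_congr_ae haeimp
      have hwx : w j x' = U j x' := by simp only [hw]; rw [if_pos hbx]
      have hwy : w j y' = U j y' := by simp only [hw]; rw [if_pos (le_trans hbx hxy)]
      rw [hIeq, hwx, hwy]
      exact hFTC j hj x' hx'I y' hy'I
    have key : ∀ x' ∈ s, ∀ y' ∈ s, x' ≤ y' →
        IntervalIntegrable (iteratedDerivWithin (j+1) g s) volume x' y' ∧
        w j y' - w j x' = ∫ τ in x'..y', iteratedDerivWithin (j+1) g s τ := by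
      intro x' hx' y' hy' hxy
      rcases le_total y' b with hyb | hby
      · exact H1 x' hx' y' hy' hxy hyb
      rcases le_total b x' with hbx | hxb
      · exact H2 x' hx' y' hy' hbx hxy
      · have hbs : b ∈ s := hsub hbmem
        obtain ⟨i1, e1⟩ := H1 x' hx' b hbs hxb le_rfl
        obtain ⟨i2, e2⟩ := H2 b hbs y' hy' le_rfl hby
        refine ⟨i1.trans i2, ?_⟩
        rw [← intervalIntegral.integral_add_adjacent_intervals i1 i2, ← e1, ← e2]
        ring
    rcases le_total x y with hxy | hyx
    · obtain ⟨i, e⟩ := key x hx y hy hxy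
      exact ⟨i, by rw [hwEq j hj hx, hwEq j hj hy]; exact e⟩
    · obtain ⟨i, e⟩ := key y hy x hx hyx
      refine ⟨i.symm, ?_⟩
      rw [hwEq j hj hx, hwEq j hj hy, intervalIntegral.integral_symm, ← e]
      ring

lemma poly_ACkOn (k K : ℕ) (b : ℝ) (c : ℕ → ℝ) (f : ℝ → ℝ) (s : Set ℝ)
    (hud : UniqueDiffOn ℝ s) (hconn : s.OrdConnected)
    (heq : Set.EqOn f (Qf K b c 0) s) : ACkOn k f s := by
  have hit : ∀ m, Set.EqOn (iteratedDerivWithin m f s) (Qf K b c m) s := by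
    intro m
    induction m with
    | zero => intro τ hτ; rw [iteratedDerivWithin_zero]; exact heq hτ
    | succ n ih =>
      intro τ hτ
      rw [iteratedDerivWithin_succ, derivWithin_congr ih (ih hτ)]
      exact (hasDerivAt_Qf K b c n τ).hasDerivWithinAt.derivWithin (hud τ hτ)
  intro j _ x hx y hy
  have huIcc : uIcc x y ⊆ s := hconn.uIcc_subset hx hy
  constructor
  · exact (((continuous_Qf K b c (j+1)).continuousOn).congr
      (fun τ hτ => hit (j+1) (huIcc hτ))).intervalIntegrable
  · rw [hit j hx, hit j hy,
      intervalIntegral.integral_congr (fun τ hτ => hit (j+1) (huIcc hτ))]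
    exact (intervalIntegral.integral_eq_sub_of_hasDerivAt
      (fun τ _ => hasDerivAt_Qf K b c j τ)
      ((continuous_Qf K b c (j+1)).intervalIntegrable x y)).symm

end CaputoAux

open CaputoAux in
/-- extending a function of `C^{k,α}_b` below `b` by its Taylor polynomial
of degree `k-1` at `b` produces a function of `C^{k,α}_a`, whose Caputo derivative with
initial point `a` agrees with that of the original function with initial point `b` on
any interval compactly contained in `(b,+∞)` (Lemma A.3 of the paper). -/
theorem caputo_taylor_extension (k : ℕ) (hk : 1 ≤ k) (α : ℝ)
    (hα : α ∈ Set.Ioo ((k : ℝ) - 1) (k : ℝ))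
    (a : EReal) (b : ℝ) (hab : a < (b : EReal))
    (I : Set ℝ) (hIint : I.OrdConnected) (hIbdd : Bornology.IsBounded I)
    (hIcpt : closure I ⊆ Set.Ioi b)
    (u : ℝ → ℝ) (hu : CkBeta k α (b : EReal) u) :
    CkBeta k α a (fun t => if b ≤ t then u t
      else ∑ j ∈ Finset.range k,
        iteratedDerivWithin j u (upBar (b : EReal)) b / (Nat.factorial j) * (t - b) ^ j) ∧
    ∀ t ∈ I,
      caputo k α a (fun t => if b ≤ t then u t
        else ∑ j ∈ Finset.range k,
          iteratedDerivWithin j u (upBar (b : EReal)) b / (Nat.factorial j) * (t - b) ^ j) t =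
      caputo k α (b : EReal) u t := by
  set c : ℕ → ℝ := fun j => iteratedDerivWithin j u (upBar (b : EReal)) b / (Nat.factorial j : ℝ)
    with hc
  set g : ℝ → ℝ := fun τ => if b ≤ τ then u τ else Qf k b c 0 τ with hgdef
  have hgeq : (fun t => if b ≤ t then u t
      else ∑ j ∈ Finset.range k,
        iteratedDerivWithin j u (upBar (b : EReal)) b / (Nat.factorial j) * (t - b) ^ j) = g := by
    funext τ
    simp only [hgdef, Qf_zero_eq, hc]
  rw [hgeq]
  -- pointwise identifications of global iterated derivatives of `g`
  have hstar_lt : ∀ (m : ℕ) (τ : ℝ), τ < b → iteratedDeriv m g τ = Qf k b c m τ := by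
    intro m τ hτ
    have hev : g =ᶠ[nhds τ] Qf k b c 0 :=
      Filter.eventuallyEq_of_mem (Iio_mem_nhds hτ)
        (fun x hx => by simp only [hgdef]; rw [if_neg (not_le.mpr hx)])
    rw [hev.iteratedDeriv_eq m, iteratedDeriv_Qf]
  have hstar_gt : ∀ (m : ℕ) (τ : ℝ), b < τ → iteratedDeriv m g τ = iteratedDeriv m u τ := by
    intro m τ hτ
    have hev : g =ᶠ[nhds τ] u :=
      Filter.eventuallyEq_of_mem (Ioi_mem_nhds hτ)
        (fun x hx => by simp only [hgdef]; rw [if_pos (le_of_lt hx)])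
    exact hev.iteratedDeriv_eq m
  -- structure of the set `upBar a`
  have hcases : (upBar a = univ ∧ upSet a = univ) ∨
      ∃ a₀ : ℝ, a = (a₀ : EReal) ∧ upBar a = Ici a₀ ∧ upSet a = Ioi a₀ := by
    induction a using EReal.rec with
    | bot => exact Or.inl ⟨upBar_bot, upSet_bot⟩
    | coe a₀ => exact Or.inr ⟨a₀, rfl, upBar_coe a₀, upSet_coe a₀⟩
    | top => exact absurd hab (by simp)
  have hBarConn : (upBar a).OrdConnected := by
    constructor
    intro x hx y _ z hz
    exact le_trans hx (EReal.coe_le_coe_iff.mpr hz.1)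
  have hsfacts : ∀ t : ℝ, a < (t : EReal) → UniqueDiffOn ℝ (upBar a ∩ Iic t) ∧
      (∀ x ∈ upBar a ∩ Iic t, ∀ τ : ℝ, x < τ → τ < t → (upBar a ∩ Iic t) ∈ nhds τ) := by
    intro t ht
    rcases hcases with ⟨hBu, _⟩ | ⟨a₀, ha₀, hBc, _⟩
    · rw [hBu, univ_inter]
      exact ⟨uniqueDiffOn_Iic t, fun x _ τ _ hτt =>
        Filter.mem_of_superset (Iio_mem_nhds hτt) Iio_subset_Iic_self⟩
    · rw [hBc, Ici_inter_Iic]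
      have ha₀t : a₀ < t := by rw [ha₀] at ht; exact EReal.coe_lt_coe_iff.mp ht
      exact ⟨uniqueDiffOn_Icc ha₀t,
        fun x hx τ hxτ hτt => Icc_mem_nhds (lt_of_le_of_lt hx.1 hxτ) hτt⟩
  have hRmeas : ∀ t : ℝ, MeasurableSet (upSet a ∩ Iio t) :=
    fun t => ((isOpen_upSet a).inter isOpen_Iio).measurableSet
  constructor
  · -- CkBeta
    intro t ht
    obtain ⟨hud, hnh⟩ := hsfacts t ht
    have hconn : (upBar a ∩ Iic t).OrdConnected := hBarConn.inter ordConnected_Iic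
    rcases le_or_gt t b with htb | hbt
    · constructor
      · apply poly_ACkOn k k b c g _ hud hconn
        intro τ hτ
        have hτb : τ ≤ b := le_trans hτ.2 htb
        simp only [hgdef]
        rcases eq_or_lt_of_le hτb with heq | hτb'
        · rw [heq, if_pos le_rfl, Qf_apply_b k b c 0 (by omega)]
          simp [hc, iteratedDerivWithin_zero]
        · rw [if_neg (not_le.mpr hτb')]
      · have hz : Set.EqOn (fun τ : ℝ => iteratedDeriv k g τ * (t - τ) ^ ((k : ℝ) - α - 1))
            (fun _ => (0 : ℝ)) (upSet a ∩ Iio t) := by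
          intro τ hτ
          have hτb : τ < b := lt_of_lt_of_le hτ.2 htb
          simp only
          rw [hstar_lt k τ hτb, Qf_eq_zero k b c k le_rfl]
          simp
        exact (integrableOn_congr_fun hz (hRmeas t)).mpr integrableOn_zero
    · -- b < t
      have hbub : upBar (b : EReal) ∩ Iic t = Icc b t := by
        rw [upBar_coe, Ici_inter_Iic]
      have hACu : ACkOn k u (Icc b t) := by
        have h := (hu t (EReal.coe_lt_coe_iff.mpr hbt)).1
        rwa [hbub] at h
      have hQb : ∀ j, j < k → Qf k b c j b = iteratedDerivWithin j u (Icc b t) b := by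
        intro j hj
        rw [Qf_apply_b k b c j hj]
        have hcj : c j * (j.factorial : ℝ) = iteratedDerivWithin j u (upBar (b : EReal)) b := by
          rw [hc]
          field_simp
        rw [hcj, upBar_coe]
        have hsetev : Ici b =ᶠ[nhds b] Icc b t := by
          rw [Filter.eventuallyEq_set]
          filter_upwards [Iio_mem_nhds hbt] with x hx
          simp only [mem_Ici, mem_Icc]
          exact ⟨fun h => ⟨h, hx.le⟩, fun h => h.1⟩
        rw [iteratedDerivWithin_eq_iteratedFDerivWithin,
          iteratedDerivWithin_eq_iteratedFDerivWithin,
          iteratedFDerivWithin_congr_set hsetev]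
      have hIccsub : Icc b t ⊆ upBar a ∩ Iic t := fun τ hτ =>
        ⟨le_of_lt (lt_of_lt_of_le hab (EReal.coe_le_coe_iff.mpr hτ.1)), hτ.2⟩
      have hACg := glue_main k hk b t hbt u c hACu hQb (upBar a ∩ Iic t)
        hIccsub (fun τ hτ => hτ.2) hconn hud hnh
      refine ⟨hACg, ?_⟩
      have hsplit : upSet a ∩ Iio t = ((upSet a ∩ Iio t) ∩ Iio b) ∪ Ico b t := by
        ext τ
        constructor
        · intro hτ
          rcases lt_or_ge τ b with h | h
          · exact Or.inl ⟨hτ, h⟩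
          · exact Or.inr ⟨h, hτ.2⟩
        · rintro (⟨hτ, _⟩ | hτ)
          · exact hτ
          · exact ⟨lt_of_lt_of_le hab (EReal.coe_le_coe_iff.mpr hτ.1), hτ.2⟩
      rw [hsplit]
      apply MeasureTheory.IntegrableOn.union
      · have hz : Set.EqOn (fun τ : ℝ => iteratedDeriv k g τ * (t - τ) ^ ((k : ℝ) - α - 1))
            (fun _ => (0 : ℝ)) ((upSet a ∩ Iio t) ∩ Iio b) := by
          intro τ hτ
          simp only
          rw [hstar_lt k τ hτ.2, Qf_eq_zero k b c k le_rfl]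
          simp
        exact (integrableOn_congr_fun hz ((hRmeas t).inter measurableSet_Iio)).mpr
          integrableOn_zero
      · rw [← Set.Ioo_union_left hbt]
        apply MeasureTheory.IntegrableOn.union
        · have hIu : IntegrableOn
              (fun τ : ℝ => iteratedDeriv k u τ * (t - τ) ^ ((k : ℝ) - α - 1)) (Ioo b t) := by
            have h := (hu t (EReal.coe_lt_coe_iff.mpr hbt)).2
            rwa [upSet_coe, Ioi_inter_Iio] at h
          have hz : Set.EqOn (fun τ : ℝ => iteratedDeriv k g τ * (t - τ) ^ ((k : ℝ) - α - 1))
              (fun τ : ℝ => iteratedDeriv k u τ * (t - τ) ^ ((k : ℝ) - α - 1)) (Ioo b t) := by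
            intro τ hτ
            simp only
            rw [hstar_gt k τ hτ.1]
          exact (integrableOn_congr_fun hz measurableSet_Ioo).mpr hIu
        · have h0 : volume.restrict ({b} : Set ℝ) = 0 := by
            rw [Measure.restrict_eq_zero]
            exact measure_singleton b
          rw [MeasureTheory.IntegrableOn, h0]
          exact MeasureTheory.integrable_zero_measure
  · -- Caputo derivative equality
    intro t htI
    have hbt : b < t := hIcpt (subset_closure htI)
    unfold caputo
    congr 1
    have h1 : ∫ τ in upSet a ∩ Iio t, iteratedDeriv k g τ * (t - τ) ^ ((k : ℝ) - α - 1)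
        = ∫ τ in upSet a ∩ Iio t,
            (Ioi b).indicator (fun τ => iteratedDeriv k u τ * (t - τ) ^ ((k : ℝ) - α - 1)) τ := by
      apply MeasureTheory.setIntegral_congr_ae (hRmeas t)
      filter_upwards [ae_ne_point b] with τ hne _
      rcases lt_or_gt_of_ne hne with hlt | hgt
      · rw [hstar_lt k τ hlt, Qf_eq_zero k b c k le_rfl,
          Set.indicator_of_notMem (by simpa using not_lt.mpr hlt.le)]
        simp
      · rw [hstar_gt k τ hgt, Set.indicator_of_mem (mem_Ioi.mpr hgt)]
    rw [h1, MeasureTheory.setIntegral_indicator measurableSet_Ioi]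
    have hseteq : (upSet a ∩ Iio t) ∩ Ioi b = upSet (b : EReal) ∩ Iio t := by
      rw [upSet_coe]
      ext τ
      constructor
      · rintro ⟨⟨_, h2⟩, h3⟩
        exact ⟨h3, h2⟩
      · rintro ⟨h1', h2'⟩
        exact ⟨⟨lt_trans hab (EReal.coe_lt_coe_iff.mpr h1'), h2'⟩, h1'⟩
    rw [hseteq]
end
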